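/- Let μ > 2 be a real number. Then for all natural numbers n and k, the sum over 0 ≤ j ≤ k and 0 ≤ i ≤ n of ((2n+k+1)/((2i+j+1)·(2(n-i)+k-j+1)))^μ is at most 2^μ · S, where S = Σ_{j≥0} Σ_{i≥0} 1/(2i+j+1)^μ, which is finite. -/

import Mathlib

open Finset

lemma my_add_rpow_le {x y : ℝ} (hx : 0 ≤ x) (hy : 0 ≤ y) {p : ℝ} (hp : 1 ≤ p) :
    (x + y) ^ p ≤ 2 ^ (p - 1) * (x ^ p + y ^ p) := by
  lift x to NNReal using hx
  lift y to NNReal using hy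
  have := NNReal.rpow_add_le_mul_rpow_add_rpow x y hp
  exact_mod_cast this

lemma my_summable (μ : ℝ) (hμ : 2 < μ) :
    Summable fun p : ℕ × ℕ => (1 : ℝ) / (2 * (p.2 : ℝ) + p.1 + 1) ^ μ := by
  have h2 : 1 < μ / 2 := by linarith
  have hg : Summable fun n : ℕ => (1 : ℝ) / ((n : ℝ) + 1) ^ (μ / 2) := by
    have h := (Real.summable_one_div_nat_rpow (p := μ / 2)).2 h2
    have h' := (summable_nat_add_iff 1).2 h
    simpa using h'
  have hprod := hg.mul_of_nonneg hg (fun n => by positivity) (fun n => by positivity)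
  refine Summable.of_nonneg_of_le (fun p => by positivity) (fun p => ?_) hprod
  obtain ⟨j, i⟩ := p
  simp only
  rw [div_mul_div_comm, one_mul]
  have hμ0 : (0:ℝ) ≤ μ / 2 := by linarith
  have key : ((j:ℝ) + 1) ^ (μ/2) * ((i:ℝ) + 1) ^ (μ/2) ≤ (2 * (i:ℝ) + j + 1) ^ μ := by
    have : (2 * (i:ℝ) + j + 1) ^ μ
        = (2 * (i:ℝ) + j + 1) ^ (μ/2) * (2 * (i:ℝ) + j + 1) ^ (μ/2) := by
      rw [← Real.rpow_add (by positivity)]; ring_nf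
    rw [this]
    have l1 : ((j:ℝ) + 1) ^ (μ/2) ≤ (2 * (i:ℝ) + j + 1) ^ (μ/2) :=
      Real.rpow_le_rpow (by positivity) (by linarith [Nat.cast_nonneg (α := ℝ) i]) hμ0
    have l2 : ((i:ℝ) + 1) ^ (μ/2) ≤ (2 * (i:ℝ) + j + 1) ^ (μ/2) :=
      Real.rpow_le_rpow (by positivity) (by have := Nat.cast_nonneg (α := ℝ) j; have := Nat.cast_nonneg (α := ℝ) i; linarith) hμ0
    exact mul_le_mul l1 l2 (by positivity) (by positivity)
  exact one_div_le_one_div_of_le (by positivity) key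

/-- For real `μ > 2`, the double sum over `0 ≤ j ≤ k`, `0 ≤ i ≤ n` of
`((2n+k+1)/((2i+j+1)(2(n-i)+k-j+1)))^μ` is bounded by `2^μ` times the (finite)
double series `S = Σ_{j≥0} Σ_{i≥0} 1/(2i+j+1)^μ`. -/
theorem double_sum_bound (μ : ℝ) (hμ : 2 < μ) (n k : ℕ) :
    (Summable fun p : ℕ × ℕ => (1 : ℝ) / (2 * (p.2 : ℝ) + p.1 + 1) ^ μ) ∧
    ∑ j ∈ Finset.range (k + 1), ∑ i ∈ Finset.range (n + 1),
        ((2 * (n : ℝ) + k + 1) /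
          ((2 * (i : ℝ) + j + 1) * (2 * ((n : ℝ) - i) + ((k : ℝ) - j) + 1))) ^ μ
      ≤ (2 : ℝ) ^ μ * ∑' (j : ℕ), ∑' (i : ℕ), (1 : ℝ) / (2 * (i : ℝ) + j + 1) ^ μ := by
  have hsum := my_summable μ hμ
  refine ⟨hsum, ?_⟩
  have hμ1 : (1:ℝ) ≤ μ := by linarith
  set T : ℝ := ∑ j ∈ range (k+1), ∑ i ∈ range (n+1), (1:ℝ)/(2*(i:ℝ)+j+1)^μ with hTdef
  -- T ≤ S
  have hrow : ∀ j : ℕ, Summable fun i : ℕ => (1:ℝ)/(2*(i:ℝ)+j+1)^μ := by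
    intro j
    exact hsum.prod_factor j
  have houter : Summable fun j : ℕ => ∑' i : ℕ, (1:ℝ)/(2*(i:ℝ)+j+1)^μ :=
    ((summable_prod_of_nonneg (fun p => by positivity)).1 hsum).2
  have hTS : T ≤ ∑' (j : ℕ), ∑' (i : ℕ), (1 : ℝ) / (2 * (i : ℝ) + j + 1) ^ μ := by
    calc T ≤ ∑ j ∈ range (k+1), ∑' i : ℕ, (1:ℝ)/(2*(i:ℝ)+j+1)^μ := by
          refine Finset.sum_le_sum fun j _ => ?_
          exact Summable.sum_le_tsum _ (fun i _ => by positivity) (hrow j)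
      _ ≤ ∑' (j : ℕ), ∑' (i : ℕ), (1 : ℝ) / (2 * (i : ℝ) + j + 1) ^ μ :=
          Summable.sum_le_tsum _ (fun j _ => tsum_nonneg fun i => by positivity) houter
  -- the reflected sum equals T
  have hrefl : ∑ j ∈ range (k+1), ∑ i ∈ range (n+1),
      (1:ℝ)/(2*((n:ℝ)-i)+((k:ℝ)-j)+1)^μ = T := by
    rw [hTdef, ← Finset.sum_range_reflect]
    refine Finset.sum_congr rfl fun j hj => ?_
    rw [← Finset.sum_range_reflect]
    refine Finset.sum_congr rfl fun i hi => ?_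
    have hj' : j ≤ k := Nat.lt_succ_iff.1 (mem_range.1 hj)
    have hi' : i ≤ n := Nat.lt_succ_iff.1 (mem_range.1 hi)
    have e1 : ((k + 1 - 1 - j : ℕ) : ℝ) = (k:ℝ) - j := by
      simp; rw [Nat.cast_sub hj']
    have e2 : ((n + 1 - 1 - i : ℕ) : ℝ) = (n:ℝ) - i := by
      simp; rw [Nat.cast_sub hi']
    rw [e1, e2]
    ring_nf
  -- pointwise bound and summation
  have hmain : ∑ j ∈ Finset.range (k + 1), ∑ i ∈ Finset.range (n + 1),
        ((2 * (n : ℝ) + k + 1) /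
          ((2 * (i : ℝ) + j + 1) * (2 * ((n : ℝ) - i) + ((k : ℝ) - j) + 1))) ^ μ
      ≤ 2 ^ (μ-1) * (T + T) := by
    have hstep : ∀ j ∈ range (k+1), ∀ i ∈ range (n+1),
        ((2 * (n : ℝ) + k + 1) /
          ((2 * (i : ℝ) + j + 1) * (2 * ((n : ℝ) - i) + ((k : ℝ) - j) + 1))) ^ μ
        ≤ 2 ^ (μ-1) * ((1:ℝ)/(2*(i:ℝ)+j+1)^μ
            + (1:ℝ)/(2*((n:ℝ)-i)+((k:ℝ)-j)+1)^μ) := by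
      intro j hj i hi
      have hj' : (j:ℝ) ≤ k := by exact_mod_cast Nat.lt_succ_iff.1 (mem_range.1 hj)
      have hi' : (i:ℝ) ≤ n := by exact_mod_cast Nat.lt_succ_iff.1 (mem_range.1 hi)
      set a : ℝ := 2*(i:ℝ)+j+1 with ha
      set b : ℝ := 2*((n:ℝ)-i)+((k:ℝ)-j)+1 with hb
      have ha0 : 0 < a := by positivity
      have hb0 : 0 < b := by rw [hb]; nlinarith
      have h1 : (2 * (n : ℝ) + k + 1) / (a * b) ≤ 1/a + 1/b := by
        have : 1/a + 1/b = (a + b)/(a*b) := by field_simp; ring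
        rw [this]
        apply div_le_div_of_nonneg_right _ (by positivity)
        · rw [ha, hb]; nlinarith
      have h2 : ((2 * (n : ℝ) + k + 1) / (a * b)) ^ μ ≤ (1/a + 1/b) ^ μ :=
        Real.rpow_le_rpow (by positivity) h1 (by linarith)
      have h3 : (1/a + 1/b) ^ μ ≤ 2 ^ (μ-1) * ((1/a)^μ + (1/b)^μ) :=
        my_add_rpow_le (by positivity) (by positivity) hμ1
      have h4 : (1/a)^μ = 1/a^μ := by rw [Real.div_rpow (by norm_num) ha0.le, Real.one_rpow]
      have h5 : (1/b)^μ = 1/b^μ := by rw [Real.div_rpow (by norm_num) hb0.le, Real.one_rpow]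
      calc ((2 * (n : ℝ) + k + 1) / (a * b)) ^ μ ≤ (1/a + 1/b) ^ μ := h2
        _ ≤ 2 ^ (μ-1) * ((1/a)^μ + (1/b)^μ) := h3
        _ = 2 ^ (μ-1) * (1/a^μ + 1/b^μ) := by rw [h4, h5]
    calc ∑ j ∈ Finset.range (k + 1), ∑ i ∈ Finset.range (n + 1),
        ((2 * (n : ℝ) + k + 1) /
          ((2 * (i : ℝ) + j + 1) * (2 * ((n : ℝ) - i) + ((k : ℝ) - j) + 1))) ^ μ
        ≤ ∑ j ∈ range (k+1), ∑ i ∈ range (n+1),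
            2 ^ (μ-1) * ((1:ℝ)/(2*(i:ℝ)+j+1)^μ + (1:ℝ)/(2*((n:ℝ)-i)+((k:ℝ)-j)+1)^μ) := by
          refine Finset.sum_le_sum fun j hj => Finset.sum_le_sum fun i hi => hstep j hj i hi
      _ = 2 ^ (μ-1) * (T + T) := by
          simp only [mul_add, Finset.sum_add_distrib, ← Finset.mul_sum]
          rw [hrefl, ← hTdef]
  have h2T : 2 ^ (μ-1) * (T + T) = 2 ^ μ * T := by
    have : (2:ℝ) ^ μ = 2 ^ (μ-1) * 2 := by
      rw [← Real.rpow_add_one (by norm_num)]; ring_nf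
    rw [this]; ring
  calc ∑ j ∈ Finset.range (k + 1), ∑ i ∈ Finset.range (n + 1),
        ((2 * (n : ℝ) + k + 1) /
          ((2 * (i : ℝ) + j + 1) * (2 * ((n : ℝ) - i) + ((k : ℝ) - j) + 1))) ^ μ
      ≤ 2 ^ (μ-1) * (T + T) := hmain
    _ = 2 ^ μ * T := h2T
    _ ≤ (2 : ℝ) ^ μ * ∑' (j : ℕ), ∑' (i : ℕ), (1 : ℝ) / (2 * (i : ℝ) + j + 1) ^ μ := by
        have : (0:ℝ) < 2 ^ μ := Real.rpow_pos_of_pos (by norm_num) μ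
        exact mul_le_mul_of_nonneg_left hTS this.le
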